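/- For any constant δ > 0 and any ε := ε_1 p_0 ∈ (0,1], (μ,λ)-selection with λ/μ ≥ (1+δ)/ε satisfies: setting γ_0 := μ/λ, for every population P of size λ and every γ ∈ (0, γ_0], the probability β(γ,P) of selecting an individual at least as fit as the individual of rank ⌈γλ⌉ satisfies β(γ,P) ≥ λγ/μ ≥ γ √((1+δ)/(ε γ_0)); in particular condition (C4) holds with this γ_0. -/

import Mathlib

open scoped ENNReal

/-- The `r`-th largest value (rank `r`, `1`-indexed) of the multiset of values
`g 0, …, g (lam-1)`. -/
noncomputable def rankVal {lam : ℕ} (g : Fin lam → ℝ) (r : ℕ) : ℝ :=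
  ((List.ofFn g).insertionSort (· ≥ ·)).getD (r - 1) 0

/-- The indices of the population `P` sorted by descending fitness. -/
noncomputable def sortedIdx {X : Type*} {lam : ℕ} (f : X → ℝ) (P : Fin lam → X) :
    List (Fin lam) :=
  letI : DecidableRel (fun i j : Fin lam => f (P j) ≤ f (P i)) :=
    fun _ _ => Real.decidableLE _ _
  (List.finRange lam).insertionSort fun i j => f (P j) ≤ f (P i)

/-- `(μ,λ)`-selection: a parent is sampled uniformly at random among the `μ`
fittest individuals of the population `P` of size `λ`. -/
noncomputable def commaSel {X : Type*} {lam : ℕ} [NeZero lam] (mu : ℕ) [NeZero mu]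
    (f : X → ℝ) (P : Fin lam → X) : PMF (Fin lam) :=
  (PMF.uniformOfFintype (Fin mu)).map fun t => (sortedIdx f P).getD (t : ℕ) default

/-- Selective pressure `β(γ, P)` of a selection mechanism: the probability of
selecting an individual at least as fit as the individual of rank `⌈γλ⌉`. -/
noncomputable def selPressure {X : Type*} {lam : ℕ} (f : X → ℝ)
    (psel : (Fin lam → X) → PMF (Fin lam)) (P : Fin lam → X) (γ : ℝ) : ℝ≥0∞ :=
  (psel P).toOuterMeasure {i | rankVal (fun i => f (P i)) ⌈γ * lam⌉₊ ≤ f (P i)}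

/-- **Lemma 1(2)**: for any constant `δ > 0` and `ε := ε₁p₀ ∈ (0,1]`,
`(μ,λ)`-selection with `λ/μ ≥ (1+δ)/ε` satisfies, with `γ₀ := μ/λ`, for every
population `P` of size `λ` and every `γ ∈ (0, γ₀]`,
`β(γ,P) ≥ λγ/μ ≥ γ √((1+δ)/(ε γ₀))`; in particular condition (C4) holds with
this `γ₀`. -/
theorem comma_selection_satisfies_C4
    {X : Type*} {lam : ℕ} [NeZero lam] (mu : ℕ) [NeZero mu]
    (f : X → ℝ) (δ ε1 p0 ε γ0 : ℝ)
    (hδ : 0 < δ) (hε : ε = ε1 * p0) (hε0 : 0 < ε) (hεle : ε ≤ 1)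
    (hγ0 : γ0 = (mu : ℝ) / lam)
    (hratio : (1 + δ) / ε ≤ (lam : ℝ) / mu) :
    ∀ (P : Fin lam → X) (γ : ℝ), 0 < γ → γ ≤ γ0 →
      ENNReal.ofReal (lam * γ / mu) ≤ selPressure f (commaSel mu f) P γ ∧
      γ * Real.sqrt ((1 + δ) / (ε * γ0)) ≤ lam * γ / mu := by
  intro P γ hγpos hγle
  have hmuN : 0 < mu := Nat.pos_of_ne_zero (NeZero.ne mu)
  have hlamN : 0 < lam := Nat.pos_of_ne_zero (NeZero.ne lam)
  have hmu : (0:ℝ) < mu := by exact_mod_cast hmuN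
  have hlam : (0:ℝ) < lam := by exact_mod_cast hlamN
  have h1 : (1:ℝ) < (1 + δ) / ε := by
    rw [lt_div_iff₀ hε0]; linarith
  have hmulam : (mu:ℝ) < lam := by
    have h2 := h1.trans_le hratio
    rw [lt_div_iff₀ hmu] at h2; linarith
  have hmulamN : mu < lam := by exact_mod_cast hmulam
  have hγ0pos : 0 < γ0 := by rw [hγ0]; positivity
  set g : Fin lam → ℝ := fun i => f (P i) with hg
  set r : ℕ := ⌈γ * (lam:ℝ)⌉₊ with hrdef
  have hrpos : 0 < r := Nat.ceil_pos.mpr (by positivity)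
  have hγlam : γ * lam ≤ (mu:ℝ) := by
    rw [hγ0] at hγle
    calc γ * lam ≤ ((mu:ℝ)/lam) * lam := by
          exact mul_le_mul_of_nonneg_right hγle hlam.le
      _ = mu := by field_simp
  have hrmu : r ≤ mu := Nat.ceil_le.mpr hγlam
  have hrlam : r ≤ lam := hrmu.trans hmulamN.le
  -- sorted list facts
  haveI : IsTotal (Fin lam) (fun i j => f (P j) ≤ f (P i)) := ⟨fun a b => le_total _ _⟩
  haveI : IsTrans (Fin lam) (fun i j => f (P j) ≤ f (P i)) := ⟨fun a b c h1 h2 => le_trans h2 h1⟩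
  haveI : IsAntisymm ℝ (· ≥ ·) := ⟨fun a b h1 h2 => le_antisymm h2 h1⟩
  haveI : IsRefl ℝ (· ≥ ·) := ⟨fun a => le_refl a⟩
  haveI : IsTotal ℝ (· ≥ ·) := ⟨fun a b => le_total b a⟩
  haveI : IsTrans ℝ (· ≥ ·) := ⟨fun a b c h1 h2 => le_trans h2 h1⟩
  set L : List (Fin lam) := sortedIdx f P with hL
  set M : List ℝ := (List.ofFn g).insertionSort (· ≥ ·) with hM
  have hLlen : L.length = lam := by
    rw [hL, sortedIdx]
    rw [List.length_insertionSort, List.length_finRange]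
  have hMlen : M.length = lam := by
    rw [hM, List.length_insertionSort, List.length_ofFn]
  have hLsorted : L.Pairwise (fun i j => f (P j) ≤ f (P i)) := List.pairwise_insertionSort _ _
  have hMsorted : M.Pairwise (· ≥ ·) := List.pairwise_insertionSort _ _
  have hperm1 : L.Perm (List.finRange lam) := by
    rw [hL, sortedIdx]; exact List.perm_insertionSort _ _
  have hperm2 : (List.ofFn g).Perm M := (List.perm_insertionSort _ _).symm
  have hperm : (L.map g).Perm M := by
    refine (hperm1.map g).trans ?_
    rw [← List.ofFn_eq_map]; exact hperm2
  have hmap : L.map g = M := by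
    refine List.Perm.eq_of_pairwise' (r := (· ≥ ·)) ?_ hMsorted hperm
    exact List.pairwise_map.mpr hLsorted
  have hr1 : r - 1 < M.length := by omega
  have hrank : rankVal g r = M.get ⟨r - 1, hr1⟩ := by
    rw [rankVal, ← hM, List.getD_eq_getElem _ _ hr1]
    rfl
  -- the key membership fact
  have key : ∀ t : Fin mu, (t : ℕ) < r →
      rankVal g r ≤ g (L.getD (t : ℕ) default) := by
    intro t ht
    have htlam : (t : ℕ) < L.length := by omega
    have htM : (t : ℕ) < M.length := by omega
    rw [List.getD_eq_getElem _ _ htlam]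
    have htmap : (t:ℕ) < (L.map g).length := by rw [List.length_map]; exact htlam
    have hgel : g (L[(t:ℕ)]) = M.get ⟨(t:ℕ), htM⟩ := by
      have h6 : (L.map g)[(t:ℕ)]'htmap = M[(t:ℕ)]'htM := by
        simp only [hmap]
      rw [List.getElem_map] at h6
      exact h6
    rw [hgel, hrank]
    exact hMsorted.rel_get_of_le (by simp only [Fin.mk_le_mk]; omega)
  constructor
  · -- probability bound
    have hpre : {t : Fin mu | (t : ℕ) < r} ⊆
        (fun t : Fin mu => L.getD (t : ℕ) default) ⁻¹'
          {i | rankVal (fun i => f (P i)) ⌈γ * (lam:ℕ)⌉₊ ≤ f (P i)} := by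
      intro t ht
      exact key t ht
    have hmono := (PMF.uniformOfFintype (Fin mu)).toOuterMeasure_mono
      (Set.inter_subset_left.trans hpre)
    have hrw : selPressure f (commaSel mu f) P γ =
        (PMF.uniformOfFintype (Fin mu)).toOuterMeasure
          ((fun t : Fin mu => (sortedIdx f P).getD (t : ℕ) default) ⁻¹'
            {i | rankVal (fun i => f (P i)) ⌈γ * (lam:ℝ)⌉₊ ≤ f (P i)}) :=
      by
        unfold selPressure commaSel
        rw [PMF.toOuterMeasure_map_apply]
        show (PMF.map (fun a : Fin mu => (a : ℕ))
          (PMF.uniformOfFintype (Fin mu))).toOuterMeasure _ = _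
        rw [PMF.toOuterMeasure_map_apply]
        rfl
    rw [hrw]
    refine le_trans ?_ hmono
    -- compute the uniform measure of {t | t < r}
    have hcard : (Finset.univ.filter (fun t : Fin mu => (t : ℕ) < r)).card = r := by
      have hfe : Finset.univ.filter (fun t : Fin mu => (t : ℕ) < r) =
          Finset.Iic (⟨r - 1, by omega⟩ : Fin mu) := by
        ext t
        have htmu := t.isLt
        simp only [Finset.mem_filter, Finset.mem_univ, true_and, Finset.mem_Iic, Fin.le_def]
        omega
      rw [hfe, Fin.card_Iic]
      show r - 1 + 1 = r
      omega
    have hval : (PMF.uniformOfFintype (Fin mu)).toOuterMeasure {t : Fin mu | (t : ℕ) < r}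
        = (r : ℝ≥0∞) / mu := by
      rw [PMF.toOuterMeasure_apply_fintype]
      classical
      have hind : ∀ t : Fin mu,
          Set.indicator {t : Fin mu | (t : ℕ) < r} (PMF.uniformOfFintype (Fin mu)) t
          = if (t:ℕ) < r then ((mu:ℝ≥0∞))⁻¹ else 0 := by
        intro t
        by_cases h : (t:ℕ) < r <;>
          simp [Set.indicator, h, PMF.uniformOfFintype_apply, Fintype.card_fin]
      simp_rw [hind]
      rw [Finset.sum_ite, Finset.sum_const, Finset.sum_const_zero, add_zero, hcard,
        nsmul_eq_mul, div_eq_mul_inv]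
    rw [hval]
    have h4 : ENNReal.ofReal ((lam:ℝ) * γ / mu) ≤ ENNReal.ofReal ((r:ℝ)/mu) :=
      ENNReal.ofReal_le_ofReal (by
        gcongr
        calc (lam:ℝ) * γ = γ * lam := by ring
          _ ≤ r := Nat.le_ceil _)
    refine h4.trans ?_
    rw [ENNReal.ofReal_div_of_pos hmu, ENNReal.ofReal_natCast, ENNReal.ofReal_natCast]
  · -- arithmetic bound
    have hlm : (0:ℝ) < (lam:ℝ) / mu := by positivity
    have key2 : (1 + δ) / (ε * γ0) ≤ ((lam:ℝ) / mu) ^ 2 := by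
      have heq : (1 + δ) / (ε * γ0) = ((1 + δ) / ε) * ((lam:ℝ) / mu) := by
        rw [hγ0]
        field_simp
      rw [heq, sq]
      exact mul_le_mul_of_nonneg_right hratio hlm.le
    have hsq : Real.sqrt ((1 + δ) / (ε * γ0)) ≤ (lam:ℝ) / mu := by
      have h3 := Real.sqrt_le_sqrt key2
      rwa [Real.sqrt_sq hlm.le] at h3
    calc γ * Real.sqrt ((1 + δ) / (ε * γ0)) ≤ γ * ((lam:ℝ) / mu) :=
          mul_le_mul_of_nonneg_left hsq hγpos.le
      _ = lam * γ / mu := by ring
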